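/- (Proposition 2.) Let Σ be a p×p symmetric positive definite real matrix (indexed by pairs), let A1 (p1×p1) and A2 (p2×p2) be invertible real matrices, and set A = A2 ⊛ A1. If K = Σ2 ⊛ Σ1 (with Σ1, Σ2 symmetric positive definite) minimizes d(K' : Σ) over all separable positive definite p×p matrices K', then A K Aᵀ = (A2 Σ2 A2ᵀ) ⊛ (A1 Σ1 A1ᵀ) minimizes d(K' : A Σ Aᵀ) over all separable positive definite p×p matrices K'. -/

import Mathlib

open Matrix BigOperators Filter

/-- The separable (Kronecker) product `M2 ⊛ M1`: entry at `((i,j),(i',j'))` is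
`M1 i i' * M2 j j'`. -/
noncomputable def sep {p1 p2 : ℕ} (M1 : Matrix (Fin p1) (Fin p1) ℝ)
    (M2 : Matrix (Fin p2) (Fin p2) ℝ) :
    Matrix (Fin p1 × Fin p2) (Fin p1 × Fin p2) ℝ :=
  fun x y => M1 x.1 y.1 * M2 x.2 y.2

/-- A `p × p` matrix is separable positive definite if it is the separable product of
two symmetric positive definite matrices. -/
def SepPD {p1 p2 : ℕ} (K : Matrix (Fin p1 × Fin p2) (Fin p1 × Fin p2) ℝ) : Prop :=
  ∃ (S1 : Matrix (Fin p1) (Fin p1) ℝ) (S2 : Matrix (Fin p2) (Fin p2) ℝ),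
    S1.PosDef ∧ S2.PosDef ∧ K = sep S1 S2

/-- The divergence `d(K : S) = log det K + trace (K⁻¹ S)`. -/
noncomputable def dvg {ι : Type*} [Fintype ι] [DecidableEq ι] (K S : Matrix ι ι ℝ) : ℝ :=
  Real.log K.det + (K⁻¹ * S).trace

/-- `P1 S B` has entries `∑_{j,j'} B j j' * S (i,j) (i',j')`. -/
noncomputable def P1 {p1 p2 : ℕ} (S : Matrix (Fin p1 × Fin p2) (Fin p1 × Fin p2) ℝ)
    (B : Matrix (Fin p2) (Fin p2) ℝ) : Matrix (Fin p1) (Fin p1) ℝ :=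
  fun i i' => ∑ j, ∑ j', B j j' * S (i, j) (i', j')

/-- `P2 S A` has entries `∑_{i,i'} A i i' * S (i,j) (i',j')`. -/
noncomputable def P2 {p1 p2 : ℕ} (S : Matrix (Fin p1 × Fin p2) (Fin p1 × Fin p2) ℝ)
    (A : Matrix (Fin p1) (Fin p1) ℝ) : Matrix (Fin p2) (Fin p2) ℝ :=
  fun j j' => ∑ i, ∑ i', A i i' * S (i, j) (i', j')


open Kronecker in
lemma sep_eq_kron {p1 p2 : ℕ} (M1 : Matrix (Fin p1) (Fin p1) ℝ)
    (M2 : Matrix (Fin p2) (Fin p2) ℝ) : sep M1 M2 = M1 ⊗ₖ M2 := rfl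

lemma sep_mul {p1 p2 : ℕ} (A1 B1 : Matrix (Fin p1) (Fin p1) ℝ)
    (A2 B2 : Matrix (Fin p2) (Fin p2) ℝ) :
    sep A1 A2 * sep B1 B2 = sep (A1 * B1) (A2 * B2) := by
  simp [sep_eq_kron, Matrix.mul_kronecker_mul]

lemma sep_transpose {p1 p2 : ℕ} (M1 : Matrix (Fin p1) (Fin p1) ℝ)
    (M2 : Matrix (Fin p2) (Fin p2) ℝ) : (sep M1 M2)ᵀ = sep M1ᵀ M2ᵀ := by
  ext x y; rfl

lemma sep_det_ne_zero {p1 p2 : ℕ} {M1 : Matrix (Fin p1) (Fin p1) ℝ}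
    {M2 : Matrix (Fin p2) (Fin p2) ℝ} (h1 : M1.det ≠ 0) (h2 : M2.det ≠ 0) :
    (sep M1 M2).det ≠ 0 := by
  rw [sep_eq_kron, Matrix.det_kronecker]
  exact mul_ne_zero (pow_ne_zero _ h1) (pow_ne_zero _ h2)

/-- Congruence preserves positive definiteness (real case). -/
lemma posDef_conj {n : ℕ} {A : Matrix (Fin n) (Fin n) ℝ} (hA : A.PosDef)
    {B : Matrix (Fin n) (Fin n) ℝ} (hB : IsUnit B.det) : (B * A * Bᵀ).PosDef := by
  refine Matrix.PosDef.of_dotProduct_mulVec_pos ?_ (fun x hx => ?_)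
  · have h := Matrix.isHermitian_mul_mul_conjTranspose B hA.1
    simpa using h
  · have hy : Bᵀ *ᵥ x ≠ 0 := by
      intro h
      apply hx
      have : (Bᵀ)⁻¹ *ᵥ (Bᵀ *ᵥ x) = (Bᵀ)⁻¹ *ᵥ 0 := by rw [h]
      rwa [Matrix.mulVec_mulVec, Matrix.nonsing_inv_mul _ (by simpa using hB),
        Matrix.one_mulVec, Matrix.mulVec_zero] at this
    have key : (star x) ⬝ᵥ ((B * A * Bᵀ) *ᵥ x)
        = star (Bᵀ *ᵥ x) ⬝ᵥ (A *ᵥ (Bᵀ *ᵥ x)) := by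
      calc star x ⬝ᵥ (B * A * Bᵀ) *ᵥ x
          = x ⬝ᵥ B *ᵥ (A *ᵥ (Bᵀ *ᵥ x)) := by
            rw [star_trivial, Matrix.mulVec_mulVec, Matrix.mulVec_mulVec]
        _ = (Bᵀ *ᵥ x) ⬝ᵥ (A *ᵥ (Bᵀ *ᵥ x)) := by
            rw [Matrix.dotProduct_mulVec, ← Matrix.mulVec_transpose]
        _ = star (Bᵀ *ᵥ x) ⬝ᵥ (A *ᵥ (Bᵀ *ᵥ x)) := by rw [star_trivial]
    rw [key]
    exact hA.dotProduct_mulVec_pos hy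

/-- Equivariance of the divergence under congruence. -/
lemma dvg_conj {n : Type*} [Fintype n] [DecidableEq n]
    {A K S : Matrix n n ℝ} (hA : IsUnit A.det) (hK : K.det ≠ 0) :
    dvg (A * K * Aᵀ) (A * S * Aᵀ) = Real.log (A.det ^ 2) + dvg K S := by
  have hAne : A.det ≠ 0 := hA.ne_zero
  have hAT : IsUnit Aᵀ.det := by simpa using hA
  have hdet : (A * K * Aᵀ).det = A.det ^ 2 * K.det := by
    simp [Matrix.det_mul]; ring
  have hinv : (A * K * Aᵀ)⁻¹ = (Aᵀ)⁻¹ * (K⁻¹ * A⁻¹) := by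
    rw [Matrix.mul_inv_rev, Matrix.mul_inv_rev]
  have htr : ((A * K * Aᵀ)⁻¹ * (A * S * Aᵀ)).trace = (K⁻¹ * S).trace := by
    rw [hinv]
    have : (Aᵀ)⁻¹ * (K⁻¹ * A⁻¹) * (A * S * Aᵀ) = (Aᵀ)⁻¹ * (K⁻¹ * S) * Aᵀ := by
      rw [show A * S * Aᵀ = A * (S * Aᵀ) from Matrix.mul_assoc _ _ _]
      rw [Matrix.mul_assoc ((Aᵀ)⁻¹) _ _, Matrix.mul_assoc (K⁻¹) _ _,
        Matrix.nonsing_inv_mul_cancel_left _ _ hA, ← Matrix.mul_assoc,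
        ← Matrix.mul_assoc, Matrix.mul_assoc _ K⁻¹ S]
    rw [this, Matrix.trace_mul_cycle, ← Matrix.mul_assoc,
      Matrix.mul_nonsing_inv _ hAT, Matrix.one_mul]
  unfold dvg
  rw [hdet, htr, Real.log_mul (pow_ne_zero _ hAne) hK]
  ring

theorem stmt4 (p1 p2 : ℕ) (hp1 : 0 < p1) (hp2 : 0 < p2)
    (S : Matrix (Fin p1 × Fin p2) (Fin p1 × Fin p2) ℝ) (hS : S.PosDef)
    (A1 : Matrix (Fin p1) (Fin p1) ℝ) (A2 : Matrix (Fin p2) (Fin p2) ℝ)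
    (hA1 : IsUnit A1.det) (hA2 : IsUnit A2.det)
    (S1 : Matrix (Fin p1) (Fin p1) ℝ) (S2 : Matrix (Fin p2) (Fin p2) ℝ)
    (hS1 : S1.PosDef) (hS2 : S2.PosDef)
    (hmin : ∀ K', SepPD K' → dvg (sep S1 S2) S ≤ dvg K' S) :
    sep A1 A2 * sep S1 S2 * (sep A1 A2)ᵀ = sep (A1 * S1 * A1ᵀ) (A2 * S2 * A2ᵀ) ∧
      ∀ K', SepPD K' →
        dvg (sep (A1 * S1 * A1ᵀ) (A2 * S2 * A2ᵀ)) (sep A1 A2 * S * (sep A1 A2)ᵀ) ≤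
          dvg K' (sep A1 A2 * S * (sep A1 A2)ᵀ) := by
  have hA : IsUnit (sep A1 A2).det := by
    rw [sep_eq_kron, Matrix.det_kronecker]
    exact (hA1.pow _).mul (hA2.pow _)
  have hpart1 : sep A1 A2 * sep S1 S2 * (sep A1 A2)ᵀ
      = sep (A1 * S1 * A1ᵀ) (A2 * S2 * A2ᵀ) := by
    rw [sep_transpose, sep_mul, sep_mul]
  refine ⟨hpart1, fun K' hK' => ?_⟩
  obtain ⟨T1, T2, hT1, hT2, rfl⟩ := hK'
  -- pull back K' through the congruence
  set U1 : Matrix (Fin p1) (Fin p1) ℝ := A1⁻¹ * T1 * (A1⁻¹)ᵀ with hU1def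
  set U2 : Matrix (Fin p2) (Fin p2) ℝ := A2⁻¹ * T2 * (A2⁻¹)ᵀ with hU2def
  have hU1 : U1.PosDef := posDef_conj hT1 (Matrix.isUnit_nonsing_inv_det _ hA1)
  have hU2 : U2.PosDef := posDef_conj hT2 (Matrix.isUnit_nonsing_inv_det _ hA2)
  have hrec1 : A1 * U1 * A1ᵀ = T1 := by
    rw [hU1def, ← Matrix.mul_assoc, Matrix.mul_nonsing_inv_cancel_left _ _ hA1,
      Matrix.mul_assoc, ← Matrix.transpose_mul, Matrix.mul_nonsing_inv _ hA1]
    simp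
  have hrec2 : A2 * U2 * A2ᵀ = T2 := by
    rw [hU2def, ← Matrix.mul_assoc, Matrix.mul_nonsing_inv_cancel_left _ _ hA2,
      Matrix.mul_assoc, ← Matrix.transpose_mul, Matrix.mul_nonsing_inv _ hA2]
    simp
  have hTU : sep T1 T2 = sep A1 A2 * sep U1 U2 * (sep A1 A2)ᵀ := by
    rw [sep_transpose, sep_mul, sep_mul, hrec1, hrec2]
  have hdS : (sep S1 S2).det ≠ 0 := sep_det_ne_zero hS1.det_pos.ne' hS2.det_pos.ne'
  have hdU : (sep U1 U2).det ≠ 0 := sep_det_ne_zero hU1.det_pos.ne' hU2.det_pos.ne'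
  rw [← hpart1, hTU, dvg_conj hA hdS, dvg_conj hA hdU]
  exact add_le_add_right (hmin _ ⟨U1, U2, hU1, hU2, rfl⟩) _
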